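/- Let g̃ ∈ I². Then { x ∈ GL₂(K) : x⁻¹·g̃·x ∈ I² } = I¹ ∪ I². Consequently, the set of left cosets x·I¹ (for x ∈ GL₂(K)) such that x⁻¹·g̃·x ∈ I² consists of exactly two elements, namely I¹ and π·I¹ where π = [[0,1],[ε,0]]. -/

import Mathlib

noncomputable section

/-- The valuation `v` on `K = k((ε))`, with `v 0 = ∞`. -/
def lv {k : Type*} [Field k] (x : LaurentSeries k) : WithTop ℤ := x.orderTop

/-- The uniformizer `ε` of `k((ε))`. -/
def eps (k : Type*) [Field k] : LaurentSeries k := HahnSeries.single (1 : ℤ) 1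

section lvlemmas

variable {k : Type*} [Field k]

lemma lv_zero : lv (0 : LaurentSeries k) = ⊤ := HahnSeries.orderTop_zero

lemma lv_eq_top {x : LaurentSeries k} : lv x = ⊤ ↔ x = 0 := HahnSeries.orderTop_eq_top

lemma lv_one : lv (1 : LaurentSeries k) = (0 : ℤ) := HahnSeries.orderTop_one

lemma lv_mul (x y : LaurentSeries k) : lv (x * y) = lv x + lv y := by
  by_cases hx : x = 0
  · simp [hx, lv_zero]
  by_cases hy : y = 0
  · simp [hy, lv_zero]
  unfold lv
  rw [← HahnSeries.order_eq_orderTop_of_ne_zero (mul_ne_zero hx hy),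
    ← HahnSeries.order_eq_orderTop_of_ne_zero hx, ← HahnSeries.order_eq_orderTop_of_ne_zero hy,
    HahnSeries.order_mul hx hy, WithTop.coe_add]

lemma lv_neg {x : LaurentSeries k} : lv (-x) = lv x := HahnSeries.orderTop_neg

lemma le_lv_add {c : WithTop ℤ} {x y : LaurentSeries k} (hx : c ≤ lv x) (hy : c ≤ lv y) :
    c ≤ lv (x + y) :=
  le_trans (le_min hx hy) HahnSeries.min_orderTop_le_orderTop_add

lemma le_lv_sub {c : WithTop ℤ} {x y : LaurentSeries k} (hx : c ≤ lv x) (hy : c ≤ lv y) :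
    c ≤ lv (x - y) := by
  rw [sub_eq_add_neg]
  exact le_lv_add hx (by rwa [lv_neg])

lemma lv_add_eq_left {x y : LaurentSeries k} (h : lv x < lv y) : lv (x + y) = lv x :=
  HahnSeries.orderTop_add_eq_left h

lemma lv_sub_eq_left {x y : LaurentSeries k} (h : lv x < lv y) : lv (x - y) = lv x := by
  rw [sub_eq_add_neg]
  exact lv_add_eq_left (by rwa [lv_neg])

lemma lv_sub_eq_right {x y : LaurentSeries k} (h : lv y < lv x) : lv (x - y) = lv y := by
  rw [show x - y = -(y - x) by ring, lv_neg, lv_sub_eq_left h]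

lemma lv_inv {u : LaurentSeries k} {c : ℤ} (h : lv u = (c : WithTop ℤ)) :
    lv u⁻¹ = ((-c : ℤ) : WithTop ℤ) := by
  have hu : u ≠ 0 := by
    intro h0; rw [h0, lv_zero] at h; exact (WithTop.top_ne_coe) h
  have h1 : lv (u * u⁻¹) = (0 : ℤ) := by rw [mul_inv_cancel₀ hu, lv_one]
  rw [lv_mul, h] at h1
  cases hinv : lv u⁻¹ with
  | top => rw [hinv] at h1; simp at h1
  | coe d =>
    rw [hinv, ← WithTop.coe_add, WithTop.coe_eq_coe] at h1
    exact WithTop.coe_eq_coe.mpr (by omega)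

/-- succ lemma : strict inequality to `+1` bound. -/
lemma wt_succ_le {b : ℤ} {c : WithTop ℤ} (h : (b : WithTop ℤ) < c) :
    ((b + 1 : ℤ) : WithTop ℤ) ≤ c := by
  cases c with
  | top => exact le_top
  | coe c =>
    rw [WithTop.coe_lt_coe] at h
    exact WithTop.coe_le_coe.mpr (by omega)

lemma wt_le_cancel {m a : ℤ} {R : WithTop ℤ} (h : ((m + a : ℤ) : WithTop ℤ) ≤ (m : WithTop ℤ) + R) :
    (a : WithTop ℤ) ≤ R := by
  cases R with
  | top => exact le_top
  | coe r =>
    rw [← WithTop.coe_add, WithTop.coe_le_coe] at h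
    exact WithTop.coe_le_coe.mpr (by omega)

lemma wt_eq_cancel {m a : ℤ} {R : WithTop ℤ} (h : (m : WithTop ℤ) + R = ((m + a : ℤ) : WithTop ℤ)) :
    R = (a : WithTop ℤ) := by
  cases R with
  | top => rw [show (m:WithTop ℤ) + ⊤ = ⊤ from add_top _] at h; exact absurd h (by exact WithTop.top_ne_coe)
  | coe r =>
    rw [← WithTop.coe_add, WithTop.coe_eq_coe] at h
    exact WithTop.coe_eq_coe.mpr (by omega)

lemma lvm_le_le {a b : ℤ} {x y : LaurentSeries k} (hx : (a : WithTop ℤ) ≤ lv x)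
    (hy : (b : WithTop ℤ) ≤ lv y) : ((a + b : ℤ) : WithTop ℤ) ≤ lv (x * y) := by
  rw [lv_mul, WithTop.coe_add]
  exact add_le_add hx hy

lemma lvm_eq_eq {a b : ℤ} {x y : LaurentSeries k} (hx : lv x = (a : WithTop ℤ))
    (hy : lv y = (b : WithTop ℤ)) : lv (x * y) = ((a + b : ℤ) : WithTop ℤ) := by
  rw [lv_mul, hx, hy, WithTop.coe_add]

lemma lvm_le_lt {a b : ℤ} {x y : LaurentSeries k} (hx : (a : WithTop ℤ) ≤ lv x)
    (hy : (b : WithTop ℤ) < lv y) : ((a + b : ℤ) : WithTop ℤ) < lv (x * y) := by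
  have h2 : ((a + (b + 1) : ℤ) : WithTop ℤ) ≤ lv (x * y) := lvm_le_le hx (wt_succ_le hy)
  refine lt_of_lt_of_le ?_ h2
  exact WithTop.coe_lt_coe.mpr (by omega)

lemma lvm_lt_le {a b : ℤ} {x y : LaurentSeries k} (hx : (a : WithTop ℤ) < lv x)
    (hy : (b : WithTop ℤ) ≤ lv y) : ((a + b : ℤ) : WithTop ℤ) < lv (x * y) := by
  rw [show x * y = y * x from mul_comm x y, show (a + b : ℤ) = b + a by ring]
  exact lvm_le_lt hy hx

lemma lt_lv_add {c : WithTop ℤ} {x y : LaurentSeries k} (hx : c < lv x) (hy : c < lv y) :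
    c < lv (x + y) :=
  lt_of_lt_of_le (lt_min hx hy) HahnSeries.min_orderTop_le_orderTop_add

lemma lv_add_eq_right {x y : LaurentSeries k} (h : lv y < lv x) : lv (x + y) = lv y := by
  rw [add_comm]; exact lv_add_eq_left h

lemma wtc {a b : ℤ} (h : a = b) : ((a : ℤ) : WithTop ℤ) = ((b : ℤ) : WithTop ℤ) := by
  exact_mod_cast h

end lvlemmas

/-- The set `I¹` of matrices `[[a,b],[c,d]]` with `v a = v d = m`, `v b ≥ m`, `v c > m`
for some `m ∈ ℤ`. -/
def I1 (k : Type*) [Field k] : Set (Matrix (Fin 2) (Fin 2) (LaurentSeries k)) :=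
  {g | ∃ m : ℤ, lv (g 0 0) = (m : WithTop ℤ) ∧ lv (g 1 1) = (m : WithTop ℤ) ∧
    (m : WithTop ℤ) ≤ lv (g 0 1) ∧ (m : WithTop ℤ) < lv (g 1 0)}

/-- The set `I²` of matrices `[[c,d],[a,b]]` with `v a = m+1`, `v d = m`, `v b ≥ m+1`,
`v c ≥ m+1` for some `m ∈ ℤ`. -/
def I2 (k : Type*) [Field k] : Set (Matrix (Fin 2) (Fin 2) (LaurentSeries k)) :=
  {g | ∃ m : ℤ, lv (g 1 0) = ((m + 1 : ℤ) : WithTop ℤ) ∧ lv (g 0 1) = (m : WithTop ℤ) ∧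
    ((m + 1 : ℤ) : WithTop ℤ) ≤ lv (g 1 1) ∧ ((m + 1 : ℤ) : WithTop ℤ) ≤ lv (g 0 0)}

/-- The matrix `π = [[0,1],[ε,0]]`. -/
def piMat (k : Type*) [Field k] : Matrix (Fin 2) (Fin 2) (LaurentSeries k) :=
  !![0, 1; eps k, 0]

section matlemmas

variable {k : Type*} [Field k] {x y : Matrix (Fin 2) (Fin 2) (LaurentSeries k)}

lemma mul_entry (x y : Matrix (Fin 2) (Fin 2) (LaurentSeries k)) (i j : Fin 2) :
    (x * y) i j = x i 0 * y 0 j + x i 1 * y 1 j := by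
  rw [Matrix.mul_apply, Fin.sum_univ_two]

lemma I1_mul_I1 (hx : x ∈ I1 k) (hy : y ∈ I1 k) : x * y ∈ I1 k := by
  obtain ⟨a, ha00, ha11, ha01, ha10⟩ := hx
  obtain ⟨b, hb00, hb11, hb01, hb10⟩ := hy
  refine ⟨a + b, ?_, ?_, ?_, ?_⟩
  · have e1 : lv (x 0 0 * y 0 0) = ((a + b : ℤ) : WithTop ℤ) := lvm_eq_eq ha00 hb00
    have e2 : ((a + b : ℤ) : WithTop ℤ) < lv (x 0 1 * y 1 0) := lvm_le_lt ha01 hb10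
    rw [mul_entry, lv_add_eq_left (by rw [e1]; exact e2), e1]
  · have e1 : lv (x 1 1 * y 1 1) = ((a + b : ℤ) : WithTop ℤ) := lvm_eq_eq ha11 hb11
    have e2 : ((a + b : ℤ) : WithTop ℤ) < lv (x 1 0 * y 0 1) := lvm_lt_le ha10 hb01
    rw [mul_entry, lv_add_eq_right (by rw [e1]; exact e2), e1]
  · rw [mul_entry]
    exact le_lv_add (lvm_le_le ha00.ge hb01) (lvm_le_le ha01 hb11.ge)
  · rw [mul_entry]
    exact lt_lv_add (lvm_lt_le ha10 hb00.ge) (lvm_le_lt ha11.ge hb10)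

lemma I1_mul_I2 (hx : x ∈ I1 k) (hy : y ∈ I2 k) : x * y ∈ I2 k := by
  obtain ⟨a, ha00, ha11, ha01, ha10⟩ := hx
  obtain ⟨b, hb10, hb01, hb11, hb00⟩ := hy
  refine ⟨a + b, ?_, ?_, ?_, ?_⟩
  · have e1 : lv (x 1 1 * y 1 0) = ((a + (b + 1) : ℤ) : WithTop ℤ) := lvm_eq_eq ha11 hb10
    have e2 : ((a + (b + 1) : ℤ) : WithTop ℤ) < lv (x 1 0 * y 0 0) :=
      lt_of_lt_of_le (WithTop.coe_lt_coe.mpr (by omega)) (lvm_le_le (wt_succ_le ha10) hb00)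
    rw [mul_entry, lv_add_eq_right (by rw [e1]; exact e2), e1]
    exact wtc (by ring)
  · have e1 : lv (x 0 0 * y 0 1) = ((a + b : ℤ) : WithTop ℤ) := lvm_eq_eq ha00 hb01
    have e2 : ((a + b : ℤ) : WithTop ℤ) < lv (x 0 1 * y 1 1) :=
      lt_of_lt_of_le (WithTop.coe_lt_coe.mpr (by omega)) (lvm_le_le ha01 hb11)
    rw [mul_entry, lv_add_eq_left (by rw [e1]; exact e2), e1]
  · rw [mul_entry]
    have t1 := lvm_le_le (wt_succ_le ha10) hb01.ge
    have t2 := lvm_le_le ha11.ge hb11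
    exact le_lv_add (le_trans (WithTop.coe_le_coe.mpr (by omega)) t1)
      (le_trans (WithTop.coe_le_coe.mpr (by omega)) t2)
  · rw [mul_entry]
    have t1 := lvm_le_le ha00.ge hb00
    have t2 := lvm_le_le ha01 hb10.ge
    exact le_lv_add (le_trans (WithTop.coe_le_coe.mpr (by omega)) t1)
      (le_trans (WithTop.coe_le_coe.mpr (by omega)) t2)

lemma I2_mul_I1 (hx : x ∈ I2 k) (hy : y ∈ I1 k) : x * y ∈ I2 k := by
  obtain ⟨a, ha10, ha01, ha11, ha00⟩ := hx
  obtain ⟨b, hb00, hb11, hb01, hb10⟩ := hy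
  refine ⟨a + b, ?_, ?_, ?_, ?_⟩
  · have e1 : lv (x 1 0 * y 0 0) = ((a + 1 + b : ℤ) : WithTop ℤ) := lvm_eq_eq ha10 hb00
    have e2 : ((a + 1 + b : ℤ) : WithTop ℤ) < lv (x 1 1 * y 1 0) :=
      lt_of_lt_of_le (WithTop.coe_lt_coe.mpr (by omega)) (lvm_le_le ha11 (wt_succ_le hb10))
    rw [mul_entry, lv_add_eq_left (by rw [e1]; exact e2), e1]
    exact wtc (by ring)
  · have e1 : lv (x 0 1 * y 1 1) = ((a + b : ℤ) : WithTop ℤ) := lvm_eq_eq ha01 hb11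
    have e2 : ((a + b : ℤ) : WithTop ℤ) < lv (x 0 0 * y 0 1) :=
      lt_of_lt_of_le (WithTop.coe_lt_coe.mpr (by omega)) (lvm_le_le ha00 hb01)
    rw [mul_entry, lv_add_eq_right (by rw [e1]; exact e2), e1]
  · rw [mul_entry]
    have t1 := lvm_le_le ha10.ge hb01
    have t2 := lvm_le_le ha11 hb11.ge
    exact le_lv_add (le_trans (WithTop.coe_le_coe.mpr (by omega)) t1)
      (le_trans (WithTop.coe_le_coe.mpr (by omega)) t2)
  · rw [mul_entry]
    have t1 := lvm_le_le ha00 hb00.ge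
    have t2 := lvm_le_le ha01.ge (wt_succ_le hb10)
    exact le_lv_add (le_trans (WithTop.coe_le_coe.mpr (by omega)) t1)
      (le_trans (WithTop.coe_le_coe.mpr (by omega)) t2)

lemma I2_mul_I2 (hx : x ∈ I2 k) (hy : y ∈ I2 k) : x * y ∈ I1 k := by
  obtain ⟨a, ha10, ha01, ha11, ha00⟩ := hx
  obtain ⟨b, hb10, hb01, hb11, hb00⟩ := hy
  refine ⟨a + b + 1, ?_, ?_, ?_, ?_⟩
  · have e1 : lv (x 0 1 * y 1 0) = ((a + (b + 1) : ℤ) : WithTop ℤ) := lvm_eq_eq ha01 hb10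
    have e2 : ((a + (b + 1) : ℤ) : WithTop ℤ) < lv (x 0 0 * y 0 0) :=
      lt_of_lt_of_le (WithTop.coe_lt_coe.mpr (by omega)) (lvm_le_le ha00 hb00)
    rw [mul_entry, lv_add_eq_right (by rw [e1]; exact e2), e1]
    exact wtc (by ring)
  · have e1 : lv (x 1 0 * y 0 1) = ((a + 1 + b : ℤ) : WithTop ℤ) := lvm_eq_eq ha10 hb01
    have e2 : ((a + 1 + b : ℤ) : WithTop ℤ) < lv (x 1 1 * y 1 1) :=
      lt_of_lt_of_le (WithTop.coe_lt_coe.mpr (by omega)) (lvm_le_le ha11 hb11)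
    rw [mul_entry, lv_add_eq_left (by rw [e1]; exact e2), e1]
    exact wtc (by ring)
  · rw [mul_entry]
    have t1 := lvm_le_le ha00 hb01.ge
    have t2 := lvm_le_le ha01.ge hb11
    exact le_lv_add (le_trans (WithTop.coe_le_coe.mpr (by omega)) t1)
      (le_trans (WithTop.coe_le_coe.mpr (by omega)) t2)
  · rw [mul_entry]
    have t1 := lvm_le_le ha10.ge hb00
    have t2 := lvm_le_le ha11 hb10.ge
    exact lt_lv_add (lt_of_lt_of_le (WithTop.coe_lt_coe.mpr (by omega)) t1)
      (lt_of_lt_of_le (WithTop.coe_lt_coe.mpr (by omega)) t2)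

lemma I1_det_lv {a : ℤ} (h00 : lv (x 0 0) = (a : WithTop ℤ)) (h11 : lv (x 1 1) = (a : WithTop ℤ))
    (h01 : (a : WithTop ℤ) ≤ lv (x 0 1)) (h10 : (a : WithTop ℤ) < lv (x 1 0)) :
    lv x.det = ((a + a : ℤ) : WithTop ℤ) := by
  rw [Matrix.det_fin_two]
  have e1 : lv (x 0 0 * x 1 1) = ((a + a : ℤ) : WithTop ℤ) := lvm_eq_eq h00 h11
  have e2 : ((a + a : ℤ) : WithTop ℤ) < lv (x 0 1 * x 1 0) := lvm_le_lt h01 h10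
  rw [lv_sub_eq_left (by rw [e1]; exact e2), e1]

lemma I2_det_lv {a : ℤ} (h10 : lv (x 1 0) = ((a + 1 : ℤ) : WithTop ℤ))
    (h01 : lv (x 0 1) = (a : WithTop ℤ)) (h11 : ((a + 1 : ℤ) : WithTop ℤ) ≤ lv (x 1 1))
    (h00 : ((a + 1 : ℤ) : WithTop ℤ) ≤ lv (x 0 0)) :
    lv x.det = ((a + a + 1 : ℤ) : WithTop ℤ) := by
  rw [Matrix.det_fin_two]
  have e1 : lv (x 0 1 * x 1 0) = ((a + (a + 1) : ℤ) : WithTop ℤ) := lvm_eq_eq h01 h10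
  have t := lvm_le_le h00 h11
  have e2 : ((a + (a + 1) : ℤ) : WithTop ℤ) < lv (x 0 0 * x 1 1) :=
    lt_of_lt_of_le (WithTop.coe_lt_coe.mpr (by omega)) t
  rw [lv_sub_eq_right (by rw [e1]; exact e2), e1]
  exact wtc (by ring)

lemma det_ne_zero_of_lv {a : ℤ} (h : lv x.det = ((a : ℤ) : WithTop ℤ)) : x.det ≠ 0 :=
  fun h0 => WithTop.top_ne_coe (by rw [h0, lv_zero] at h; exact h)

lemma isUnit_of_det_lv {a : ℤ} (h : lv x.det = ((a : ℤ) : WithTop ℤ)) : IsUnit x :=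
  (Matrix.isUnit_iff_isUnit_det x).mpr (isUnit_iff_ne_zero.mpr (det_ne_zero_of_lv h))

lemma I1_isUnit (hx : x ∈ I1 k) : IsUnit x := by
  obtain ⟨a, h00, h11, h01, h10⟩ := hx
  exact isUnit_of_det_lv (I1_det_lv h00 h11 h01 h10)

lemma I2_isUnit (hx : x ∈ I2 k) : IsUnit x := by
  obtain ⟨a, h10, h01, h11, h00⟩ := hx
  exact isUnit_of_det_lv (I2_det_lv h10 h01 h11 h00)

lemma inv_eq_smul (x : Matrix (Fin 2) (Fin 2) (LaurentSeries k)) :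
    x⁻¹ = x.det⁻¹ • !![x 1 1, -(x 0 1); -(x 1 0), x 0 0] := by
  rw [Matrix.inv_def, Matrix.adjugate_fin_two, Ring.inverse_eq_inv]

lemma I1_inv (hx : x ∈ I1 k) : x⁻¹ ∈ I1 k := by
  obtain ⟨a, h00, h11, h01, h10⟩ := hx
  have hdet := I1_det_lv h00 h11 h01 h10
  have hinv : lv (x.det⁻¹) = ((-(a + a) : ℤ) : WithTop ℤ) := lv_inv hdet
  have e00 : x⁻¹ 0 0 = x.det⁻¹ * x 1 1 := by rw [inv_eq_smul]; simp
  have e01 : x⁻¹ 0 1 = -(x.det⁻¹ * x 0 1) := by rw [inv_eq_smul]; simp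
  have e10 : x⁻¹ 1 0 = -(x.det⁻¹ * x 1 0) := by rw [inv_eq_smul]; simp
  have e11 : x⁻¹ 1 1 = x.det⁻¹ * x 0 0 := by rw [inv_eq_smul]; simp
  refine ⟨-a, ?_, ?_, ?_, ?_⟩
  · rw [e00, lvm_eq_eq hinv h11]; exact wtc (by ring)
  · rw [e11, lvm_eq_eq hinv h00]; exact wtc (by ring)
  · rw [e01, lv_neg]
    exact le_trans (WithTop.coe_le_coe.mpr (by omega)) (lvm_le_le hinv.ge h01)
  · rw [e10, lv_neg]
    have t := lvm_le_lt hinv.ge h10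
    exact lt_of_le_of_lt (WithTop.coe_le_coe.mpr (by omega)) t

lemma I2_inv (hx : x ∈ I2 k) : x⁻¹ ∈ I2 k := by
  obtain ⟨a, h10, h01, h11, h00⟩ := hx
  have hdet := I2_det_lv h10 h01 h11 h00
  have hinv : lv (x.det⁻¹) = ((-(a + a + 1) : ℤ) : WithTop ℤ) := lv_inv hdet
  have e00 : x⁻¹ 0 0 = x.det⁻¹ * x 1 1 := by rw [inv_eq_smul]; simp
  have e01 : x⁻¹ 0 1 = -(x.det⁻¹ * x 0 1) := by rw [inv_eq_smul]; simp
  have e10 : x⁻¹ 1 0 = -(x.det⁻¹ * x 1 0) := by rw [inv_eq_smul]; simp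
  have e11 : x⁻¹ 1 1 = x.det⁻¹ * x 0 0 := by rw [inv_eq_smul]; simp
  refine ⟨-a - 1, ?_, ?_, ?_, ?_⟩
  · rw [e10, lv_neg, lvm_eq_eq hinv h10]; exact wtc (by ring)
  · rw [e01, lv_neg, lvm_eq_eq hinv h01]; exact wtc (by ring)
  · rw [e11]
    exact le_trans (WithTop.coe_le_coe.mpr (by omega)) (lvm_le_le hinv.ge h00)
  · rw [e00]
    exact le_trans (WithTop.coe_le_coe.mpr (by omega)) (lvm_le_le hinv.ge h11)

lemma lv_eps : lv (eps k) = ((1 : ℤ) : WithTop ℤ) := HahnSeries.orderTop_single one_ne_zero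

lemma piMat_mem_I2 : piMat k ∈ I2 k := by
  refine ⟨0, ?_, ?_, ?_, ?_⟩
  · show lv (eps k) = _
    rw [lv_eps]; exact wtc (by ring)
  · show lv (1 : LaurentSeries k) = _
    rw [lv_one]
  · show _ ≤ lv (0 : LaurentSeries k)
    rw [lv_zero]; exact le_top
  · show _ ≤ lv (0 : LaurentSeries k)
    rw [lv_zero]; exact le_top

lemma one_mem_I1 : (1 : Matrix (Fin 2) (Fin 2) (LaurentSeries k)) ∈ I1 k := by
  refine ⟨0, ?_, ?_, ?_, ?_⟩
  · show lv ((1 : Matrix (Fin 2) (Fin 2) (LaurentSeries k)) 0 0) = _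
    rw [Matrix.one_apply_eq, lv_one]
  · rw [Matrix.one_apply_eq, lv_one]
  · rw [Matrix.one_apply_ne (by decide), lv_zero]; exact le_top
  · rw [Matrix.one_apply_ne (by decide), lv_zero]; exact lt_top_iff_ne_top.mpr WithTop.coe_ne_top

end matlemmas

section cosets

variable {k : Type*} [Field k] {x y : Matrix (Fin 2) (Fin 2) (LaurentSeries k)}

lemma lv_sub_ne {u v : LaurentSeries k} (h : lv u ≠ lv v) :
    lv (u - v) = min (lv u) (lv v) := by
  rcases lt_or_gt_of_ne h with hlt | hgt
  · rw [lv_sub_eq_left hlt, min_eq_left hlt.le]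
  · rw [lv_sub_eq_right hgt, min_eq_right hgt.le]

lemma I1_coset (hx : x ∈ I1 k) :
    (fun B => x * B) '' I1 k = I1 k := by
  have hud := (Matrix.isUnit_iff_isUnit_det x).mp (I1_isUnit hx)
  ext C
  constructor
  · rintro ⟨B, hB, rfl⟩
    exact I1_mul_I1 hx hB
  · intro hC
    exact ⟨x⁻¹ * C, I1_mul_I1 (I1_inv hx) hC, Matrix.mul_nonsing_inv_cancel_left _ _ hud⟩

lemma I2_coset (hx : x ∈ I2 k) :
    (fun B => x * B) '' I1 k = (fun B => piMat k * B) '' I1 k := by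
  have hud := (Matrix.isUnit_iff_isUnit_det x).mp (I2_isUnit hx)
  have hpd := (Matrix.isUnit_iff_isUnit_det (piMat k)).mp (I2_isUnit (piMat_mem_I2 (k := k)))
  ext C
  constructor
  · rintro ⟨B, hB, rfl⟩
    refine ⟨(piMat k)⁻¹ * x * B, I1_mul_I1 (I2_mul_I2 (I2_inv piMat_mem_I2) hx) hB, ?_⟩
    show piMat k * ((piMat k)⁻¹ * x * B) = x * B
    rw [mul_assoc ((piMat k)⁻¹) x B]
    exact Matrix.mul_nonsing_inv_cancel_left _ _ hpd
  · rintro ⟨B, hB, rfl⟩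
    refine ⟨x⁻¹ * piMat k * B, I1_mul_I1 (I2_mul_I2 (I2_inv hx) piMat_mem_I2) hB, ?_⟩
    show x * (x⁻¹ * piMat k * B) = piMat k * B
    rw [mul_assoc x⁻¹ (piMat k) B]
    exact Matrix.mul_nonsing_inv_cancel_left _ _ hud

/-- The endgame: if `v(x01) = q` and the other column entries have valuation `≥ q+1`,
then the conjugation equation forces `v(x10) = q+1`, so `x ∈ I2`. -/
lemma endgame {g y : Matrix (Fin 2) (Fin 2) (LaurentSeries k)} {m q : ℤ}
    (hg10 : lv (g 1 0) = ((m + 1 : ℤ) : WithTop ℤ))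
    (hg11 : ((m + 1 : ℤ) : WithTop ℤ) ≤ lv (g 1 1))
    (hy01 : lv (y 0 1) = (m : WithTop ℤ))
    (hy11 : ((m + 1 : ℤ) : WithTop ℤ) ≤ lv (y 1 1))
    (e4 : g 1 0 * x 0 1 + g 1 1 * x 1 1 = x 1 0 * y 0 1 + x 1 1 * y 1 1)
    (hQ : lv (x 0 1) = (q : WithTop ℤ))
    (hS : ((q + 1 : ℤ) : WithTop ℤ) ≤ lv (x 1 1))
    (hP : ((q + 1 : ℤ) : WithTop ℤ) ≤ lv (x 0 0)) : x ∈ I2 k := by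
  have key : x 1 0 * y 0 1 = g 1 0 * x 0 1 + (g 1 1 * x 1 1 - x 1 1 * y 1 1) := by
    linear_combination -e4
  have hA : lv (g 1 0 * x 0 1) = ((m + 1 + q : ℤ) : WithTop ℤ) := lvm_eq_eq hg10 hQ
  have hB : ((m + 1 + (q + 1) : ℤ) : WithTop ℤ) ≤ lv (g 1 1 * x 1 1 - x 1 1 * y 1 1) := by
    refine le_lv_sub (lvm_le_le hg11 hS) ?_
    exact le_trans (WithTop.coe_le_coe.mpr (by omega)) (lvm_le_le hS hy11)
  have hkey : lv (x 1 0 * y 0 1) = ((m + 1 + q : ℤ) : WithTop ℤ) := by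
    rw [key, lv_add_eq_left ?_, hA]
    rw [hA]
    exact lt_of_lt_of_le (WithTop.coe_lt_coe.mpr (by omega)) hB
  rw [lv_mul, hy01, add_comm, wtc (by ring : (m + 1 + q : ℤ) = m + (q + 1))] at hkey
  exact ⟨q, wt_eq_cancel hkey, hQ, hS, hP⟩

end cosets

section main

variable {k : Type*} [Field k]

theorem conj_set_eq {g : Matrix (Fin 2) (Fin 2) (LaurentSeries k)} (hg : g ∈ I2 k) :
    {x : Matrix (Fin 2) (Fin 2) (LaurentSeries k) | IsUnit x ∧ x⁻¹ * g * x ∈ I2 k}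
      = I1 k ∪ I2 k := by
  ext x
  simp only [Set.mem_setOf_eq, Set.mem_union]
  constructor
  · rintro ⟨hu, hy⟩
    have hud := (Matrix.isUnit_iff_isUnit_det x).mp hu
    set y := x⁻¹ * g * x with hydef
    have hgx : g * x = x * y := by
      rw [hydef, ← mul_assoc, ← mul_assoc, Matrix.mul_nonsing_inv x hud, one_mul]
    obtain ⟨n, hy10, hy01, hy11, hy00⟩ := hy
    obtain ⟨m, hg10, hg01, hg11, hg00⟩ := hg
    have hdx : x.det ≠ 0 := hud.ne_zero
    have hdy : y.det = g.det := by
      have h2 : g.det * x.det = x.det * y.det := by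
        rw [← Matrix.det_mul, ← Matrix.det_mul, hgx]
      rw [mul_comm g.det x.det] at h2
      exact (mul_left_cancel₀ hdx h2).symm
    have hnm : n = m := by
      have d1 := I2_det_lv hg10 hg01 hg11 hg00
      have d2 := I2_det_lv hy10 hy01 hy11 hy00
      rw [hdy, d1] at d2
      have := WithTop.coe_eq_coe.mp d2
      omega
    rw [hnm] at hy10 hy01 hy11 hy00
    have e1 : g 0 0 * x 0 0 + g 0 1 * x 1 0 = x 0 0 * y 0 0 + x 0 1 * y 1 0 := by
      have h := congrFun (congrFun hgx 0) 0
      rwa [mul_entry, mul_entry] at h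
    have e2 : g 0 0 * x 0 1 + g 0 1 * x 1 1 = x 0 0 * y 0 1 + x 0 1 * y 1 1 := by
      have h := congrFun (congrFun hgx 0) 1
      rwa [mul_entry, mul_entry] at h
    have e4 : g 1 0 * x 0 1 + g 1 1 * x 1 1 = x 1 0 * y 0 1 + x 1 1 * y 1 1 := by
      have h := congrFun (congrFun hgx 1) 1
      rwa [mul_entry, mul_entry] at h
    by_cases hBc : min (lv (x 0 0)) (lv (x 1 1)) ≤ lv (x 0 1)
    · -- I1 branch
      have hPS : lv (x 0 0) = lv (x 1 1) := by
        by_contra hne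
        have key2 : g 0 1 * x 1 1 - x 0 0 * y 0 1 = x 0 1 * y 1 1 - g 0 0 * x 0 1 := by
          linear_combination e2
        have hR : lv (x 0 1) + ((m + 1 : ℤ) : WithTop ℤ)
            ≤ lv (x 0 1 * y 1 1 - g 0 0 * x 0 1) := by
          refine le_lv_sub ?_ ?_
          · rw [lv_mul]; exact add_le_add le_rfl hy11
          · rw [lv_mul, add_comm (lv (g 0 0)) (lv (x 0 1))]; exact add_le_add le_rfl hg00
        have hL1 : lv (g 0 1 * x 1 1) = (m : WithTop ℤ) + lv (x 1 1) := by rw [lv_mul, hg01]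
        have hL2 : lv (x 0 0 * y 0 1) = lv (x 0 0) + (m : WithTop ℤ) := by rw [lv_mul, hy01]
        rcases lt_or_gt_of_ne hne with hlt | hgt
        · rw [min_eq_left hlt.le] at hBc
          rcases WithTop.ne_top_iff_exists.mp (ne_top_of_lt hlt) with ⟨p, hp⟩
          have hsub : lv (g 0 1 * x 1 1 - x 0 0 * y 0 1) = lv (x 0 0) + (m : WithTop ℤ) := by
            rw [lv_sub_eq_right ?_, hL2]
            rw [hL1, hL2, add_comm (m : WithTop ℤ) (lv (x 1 1))]
            exact WithTop.add_lt_add_right WithTop.coe_ne_top hlt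
          have c1 : lv (x 0 1) + ((m + 1 : ℤ) : WithTop ℤ) ≤ ((p + m : ℤ) : WithTop ℤ) :=
            calc lv (x 0 1) + ((m + 1 : ℤ) : WithTop ℤ)
                ≤ lv (x 0 1 * y 1 1 - g 0 0 * x 0 1) := hR
              _ = lv (g 0 1 * x 1 1 - x 0 0 * y 0 1) := by rw [key2]
              _ = lv (x 0 0) + (m : WithTop ℤ) := hsub
              _ = ((p + m : ℤ) : WithTop ℤ) := by rw [← hp, ← WithTop.coe_add]
          have c2 : ((p + (m + 1) : ℤ) : WithTop ℤ) ≤ lv (x 0 1) + ((m + 1 : ℤ) : WithTop ℤ) := by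
            rw [WithTop.coe_add]
            exact add_le_add (hp ▸ hBc) le_rfl
          have := WithTop.coe_le_coe.mp (le_trans c2 c1)
          omega
        · rw [min_eq_right hgt.le] at hBc
          rcases WithTop.ne_top_iff_exists.mp (ne_top_of_lt hgt) with ⟨s, hs⟩
          have hsub : lv (g 0 1 * x 1 1 - x 0 0 * y 0 1) = (m : WithTop ℤ) + lv (x 1 1) := by
            rw [lv_sub_eq_left ?_, hL1]
            rw [hL1, hL2, add_comm (m : WithTop ℤ) (lv (x 1 1))]
            exact WithTop.add_lt_add_right WithTop.coe_ne_top hgt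
          have c1 : lv (x 0 1) + ((m + 1 : ℤ) : WithTop ℤ) ≤ ((m + s : ℤ) : WithTop ℤ) :=
            calc lv (x 0 1) + ((m + 1 : ℤ) : WithTop ℤ)
                ≤ lv (x 0 1 * y 1 1 - g 0 0 * x 0 1) := hR
              _ = lv (g 0 1 * x 1 1 - x 0 0 * y 0 1) := by rw [key2]
              _ = (m : WithTop ℤ) + lv (x 1 1) := hsub
              _ = ((m + s : ℤ) : WithTop ℤ) := by rw [← hs, ← WithTop.coe_add]
          have c2 : ((s + (m + 1) : ℤ) : WithTop ℤ) ≤ lv (x 0 1) + ((m + 1 : ℤ) : WithTop ℤ) := by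
            rw [WithTop.coe_add]
            exact add_le_add (hs ▸ hBc) le_rfl
          have := WithTop.coe_le_coe.mp (le_trans c2 c1)
          omega
      rw [← hPS, min_self] at hBc
      cases hPc : lv (x 0 0) with
      | top =>
        exfalso
        have hx00 : x 0 0 = 0 := lv_eq_top.mp hPc
        have hx01 : x 0 1 = 0 := lv_eq_top.mp (top_le_iff.mp (hPc ▸ hBc))
        apply hdx
        rw [Matrix.det_fin_two, hx00, hx01]
        ring
      | coe p =>
        left
        refine ⟨p, hPc, by rw [← hPS]; exact hPc, hPc ▸ hBc, ?_⟩
        have key1 : g 0 1 * x 1 0 = x 0 0 * y 0 0 + x 0 1 * y 1 0 - g 0 0 * x 0 0 := by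
          linear_combination e1
        have hb : ((p + (m + 1) : ℤ) : WithTop ℤ) ≤ lv (g 0 1 * x 1 0) := by
          rw [key1]
          refine le_lv_sub (le_lv_add ?_ ?_) ?_
          · exact lvm_le_le hPc.ge hy00
          · exact lvm_le_le (hPc ▸ hBc) hy10.ge
          · exact le_trans (WithTop.coe_le_coe.mpr (by omega)) (lvm_le_le hg00 hPc.ge)
        rw [lv_mul, hg01, wtc (by ring : (p + (m + 1) : ℤ) = m + (p + 1))] at hb
        exact lt_of_lt_of_le (WithTop.coe_lt_coe.mpr (by omega)) (wt_le_cancel hb)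
    · have hQlt := not_le.mp hBc
      have h1 : lv (x 0 1) < lv (x 0 0) := lt_of_lt_of_le hQlt (min_le_left _ _)
      have h2 : lv (x 0 1) < lv (x 1 1) := lt_of_lt_of_le hQlt (min_le_right _ _)
      cases hQc : lv (x 0 1) with
      | top => exact absurd (hQc ▸ h1) not_top_lt
      | coe q =>
        right
        exact endgame hg10 hg11 hy01 hy11 e4 hQc (wt_succ_le (hQc ▸ h2)) (wt_succ_le (hQc ▸ h1))
  · rintro (hx | hx)
    · exact ⟨I1_isUnit hx, I2_mul_I1 (I1_mul_I2 (I1_inv hx) hg) hx⟩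
    · exact ⟨I2_isUnit hx, I1_mul_I2 (I2_mul_I2 (I2_inv hx) hg) hx⟩

end main

theorem statement7 (k : Type*) [Field k] [IsAlgClosed k]
    (g : Matrix (Fin 2) (Fin 2) (LaurentSeries k)) (hg : g ∈ I2 k) :
    {x : Matrix (Fin 2) (Fin 2) (LaurentSeries k) | IsUnit x ∧ x⁻¹ * g * x ∈ I2 k}
      = I1 k ∪ I2 k ∧
    {S : Set (Matrix (Fin 2) (Fin 2) (LaurentSeries k)) |
        ∃ x : Matrix (Fin 2) (Fin 2) (LaurentSeries k),
          IsUnit x ∧ x⁻¹ * g * x ∈ I2 k ∧ S = (fun B => x * B) '' I1 k}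
      = {I1 k, (fun B => piMat k * B) '' I1 k} ∧
    I1 k ≠ (fun B => piMat k * B) '' I1 k := by
  have part1 := conj_set_eq hg
  refine ⟨part1, ?_, ?_⟩
  · ext S
    simp only [Set.mem_setOf_eq, Set.mem_insert_iff, Set.mem_singleton_iff]
    constructor
    · rintro ⟨x, hu, hc, rfl⟩
      have hx : x ∈ I1 k ∪ I2 k := by rw [← part1]; exact ⟨hu, hc⟩
      rcases hx with hx | hx
      · left; exact I1_coset hx
      · right; exact I2_coset hx
    · rintro (rfl | rfl)
      · refine ⟨1, isUnit_one, ?_, (I1_coset one_mem_I1).symm⟩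
        simpa using hg
      · refine ⟨piMat k, I2_isUnit piMat_mem_I2, ?_, rfl⟩
        have hp : piMat k ∈ I1 k ∪ I2 k := Or.inr piMat_mem_I2
        rw [← part1] at hp
        exact hp.2
  · intro h
    have hmem : piMat k * 1 ∈ (fun B => piMat k * B) '' I1 k := ⟨1, one_mem_I1, rfl⟩
    rw [← h, mul_one] at hmem
    obtain ⟨mm, hm, -⟩ := hmem
    have h0 : lv ((piMat k) 0 0) = ⊤ := by
      show lv (0 : LaurentSeries k) = ⊤
      exact lv_zero
    rw [h0] at hm
    exact WithTop.top_ne_coe hm
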